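/- arXiv:1506.06830 — 4 statements merged into one kernel-verified Lean document; each statement's English description precedes it below -/
import Mathlib

section
/- Let p be an odd prime and m a positive integer. For any nonzero element c of F_{p^m} and any y in F_p^*, the sum over all x in F_{p^m}^* of ω^{Tr(y·c·x^{p^{m/2}+1})} equals -1 - p^{m/2}, where m is even, c + c^{p^{m/2}} ≠ 0, ω is a primitive p-th root of unity, and Tr is the trace from F_{p^m} to F_p. -/
open Finset Polynomial

private lemma card_le_natDegree {F : Type} [Field F] [DecidableEq F]
    {P : Polynomial F} (hP : P ≠ 0) {S : Finset F} (h : ∀ x ∈ S, P.eval x = 0) :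
    S.card ≤ P.natDegree := by
  have hsub : S ⊆ P.roots.toFinset := fun x hx =>
    Multiset.mem_toFinset.2 ((Polynomial.mem_roots hP).2 (h x hx))
  calc S.card ≤ P.roots.toFinset.card := Finset.card_le_card hsub
    _ ≤ Multiset.card P.roots := Multiset.toFinset_card_le _
    _ ≤ P.natDegree := P.card_roots'

private lemma trace_formula (p m : ℕ) (hp : p.Prime) (F : Type) [Field F] [Fintype F]
    [DecidableEq F] [Algebra (ZMod p) F] (hF : Fintype.card F = p ^ m) (x : F) :
    algebraMap (ZMod p) F (Algebra.trace (ZMod p) F x) = ∑ i ∈ Finset.range m, x ^ p ^ i := by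
  classical
  haveI : Fact p.Prime := ⟨hp⟩
  haveI : CharP F p := charP_of_injective_algebraMap (algebraMap (ZMod p) F).injective p
  have hfr : Module.finrank (ZMod p) F = m := by
    have h := Module.card_eq_pow_finrank (K := ZMod p) (V := F)
    rw [ZMod.card, hF] at h
    exact Nat.pow_right_injective hp.two_le h.symm
  -- Frobenius as an algebra equivalence
  let frh : F →ₐ[ZMod p] F :=
    { toRingHom := frobenius F p
      commutes' := fun r => by
        show frobenius F p (algebraMap (ZMod p) F r) = algebraMap (ZMod p) F r
        rw [frobenius_def, ← map_pow, ZMod.pow_card] }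
  have hbij : Function.Bijective frh :=
    (Finite.injective_iff_bijective).1 (frh.toRingHom.injective)
  let fr : F ≃ₐ[ZMod p] F := AlgEquiv.ofBijective frh hbij
  have hfr1 : ∀ z : F, fr z = z ^ p := fun z => rfl
  have hfrpow : ∀ (i : ℕ) (z : F), (fr ^ i) z = z ^ p ^ i := by
    intro i
    induction i with
    | zero => intro z; simp
    | succ i ih =>
      intro z
      rw [pow_succ, AlgEquiv.mul_apply, hfr1, ih, ← pow_mul, ← pow_succ']
  have hne : ∀ i j : ℕ, i < j → j < m → fr ^ i ≠ fr ^ j := by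
    intro i j hij hjm hEq
    have hall : ∀ z : F, z ^ p ^ j = z ^ p ^ i := by
      intro z
      have := congrArg (fun σ : F ≃ₐ[ZMod p] F => σ z) hEq
      simpa [hfrpow] using this.symm
    set P : Polynomial F := X ^ p ^ j - X ^ p ^ i with hP
    have hPne : P ≠ 0 := by
      intro h0
      have hc : P.coeff (p ^ j) = 1 := by
        rw [hP, coeff_sub, coeff_X_pow, coeff_X_pow, if_pos rfl,
          if_neg (by exact fun h => absurd (Nat.pow_right_injective hp.two_le h.symm) hij.ne),
          sub_zero]
      rw [h0] at hc
      simp at hc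
    have hroots : ∀ z ∈ (Finset.univ : Finset F), P.eval z = 0 := by
      intro z _
      simp [hP, hall z, sub_self]
    have hle := card_le_natDegree hPne hroots
    have hdeg : P.natDegree ≤ p ^ j := by
      refine le_trans (natDegree_sub_le _ _) ?_
      simp [natDegree_X_pow, Nat.pow_le_pow_right hp.one_lt.le hij.le]
    rw [Finset.card_univ, hF] at hle
    have : p ^ m ≤ p ^ j := le_trans hle hdeg
    exact absurd (Nat.pow_le_pow_iff_right hp.one_lt |>.1 this) (not_le.2 hjm)
  have hinj : ∀ a ∈ Finset.range m, ∀ b ∈ Finset.range m,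
      (fun i => fr ^ i) a = (fun i => fr ^ i) b → a = b := by
    intro a ha b hb hab
    rcases lt_trichotomy a b with h | h | h
    · exact absurd hab (hne a b h (Finset.mem_range.1 hb))
    · exact h
    · exact absurd hab.symm (hne b a h (Finset.mem_range.1 ha))
  have huniv : (Finset.range m).image (fun i => fr ^ i) = Finset.univ := by
    apply Finset.eq_univ_of_card
    rw [Finset.card_image_of_injOn (fun a ha b hb => hinj a ha b hb), Finset.card_range,
      ← Nat.card_eq_fintype_card, IsGalois.card_aut_eq_finrank, hfr]
  rw [trace_eq_sum_automorphisms, ← huniv, Finset.sum_image hinj]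
  exact Finset.sum_congr rfl fun i _ => hfrpow i x

theorem stmt_0 (p m : ℕ) (hp : p.Prime) (hp2 : p ≠ 2) (hm : 0 < m) (hme : Even m)
    (F : Type) [Field F] [Fintype F] [DecidableEq F] [Algebra (ZMod p) F]
    (hF : Fintype.card F = p ^ m)
    (c : F) (hc : c ≠ 0) (hcc : c + c ^ (p ^ (m / 2)) ≠ 0)
    (y : ZMod p) (hy : y ≠ 0) :
    ∑ x ∈ Finset.univ.filter (fun x : F => x ≠ 0),
        Complex.exp (2 * (Real.pi : ℂ) * Complex.I / (p : ℂ)) ^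
          (Algebra.trace (ZMod p) F
            (algebraMap (ZMod p) F y * c * x ^ (p ^ (m / 2) + 1))).val
      = -1 - (p : ℂ) ^ (m / 2) := by
  classical
  obtain ⟨n, hmn⟩ := hme
  have hn2 : m / 2 = n := by omega
  have hn0 : 0 < n := by omega
  rw [hn2] at hcc ⊢
  haveI : Fact p.Prime := ⟨hp⟩
  haveI : NeZero p := ⟨hp.ne_zero⟩
  haveI : CharP F p := charP_of_injective_algebraMap (algebraMap (ZMod p) F).injective p
  set q := p ^ n with hqdef
  have hq1 : 1 < q := Nat.one_lt_pow hn0.ne' hp.one_lt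
  have hcard : Fintype.card F = q * q := by rw [hF, hmn, pow_add]
  set ω : ℂ := Complex.exp (2 * (Real.pi : ℂ) * Complex.I / (p : ℂ)) with hωdef
  have hω : IsPrimitiveRoot ω p := Complex.isPrimitiveRoot_exp p hp.ne_zero
  have hωp : ω ^ p = 1 := hω.pow_eq_one
  set ψ : F → ℂ := fun z => ω ^ (Algebra.trace (ZMod p) F z).val with hψdef
  have hmod : ∀ k : ℕ, ω ^ (k % p) = ω ^ k := by
    intro k
    conv_rhs => rw [← Nat.mod_add_div k p]
    rw [pow_add, pow_mul, hωp, one_pow, mul_one]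
  have hψadd : ∀ z w : F, ψ (z + w) = ψ z * ψ w := by
    intro z w
    simp only [hψdef]
    rw [map_add, ZMod.val_add, hmod, pow_add]
  have hψ0 : ψ 0 = 1 := by simp [hψdef]
  set a : F := algebraMap (ZMod p) F y * c with hadef
  have hya : algebraMap (ZMod p) F y ≠ 0 := fun h => hy ((_root_.map_eq_zero _).1 h)
  have ha : a ≠ 0 := mul_ne_zero hya hc
  set S : Finset F := Finset.univ.filter (fun x : F => x ≠ 0) with hSdef
  have hScard : S.card = q * q - 1 := by
    rw [hSdef, Finset.filter_ne', Finset.card_erase_of_mem (Finset.mem_univ 0),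
      Finset.card_univ, hcard]
  have hfib_le : ∀ u : F, u ≠ 0 →
      (S.filter (fun x => x ^ (q + 1) = u)).card ≤ q + 1 := by
    intro u hu
    have h := card_le_natDegree (P := (X : Polynomial F) ^ (q + 1) - C u)
      (X_pow_sub_C_ne_zero (Nat.succ_pos q) u)
      (S := S.filter (fun x => x ^ (q + 1) = u)) (by
        intro x hx
        have hxx := (Finset.mem_filter.1 hx).2
        simp [hxx])
    rwa [natDegree_X_pow_sub_C] at h
  set S1 : Finset F := Finset.univ.filter (fun u : F => u ≠ 0 ∧ u ^ (q - 1) = 1) with hS1def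
  have hS1le : S1.card ≤ q - 1 := by
    have h := card_le_natDegree (P := (X : Polynomial F) ^ (q - 1) - C 1)
      (X_pow_sub_C_ne_zero (by omega) 1) (S := S1) (by
        intro x hx
        have hxx := (Finset.mem_filter.1 hx).2.2
        simp [hxx])
    rwa [natDegree_X_pow_sub_C] at h
  have hmul' : (q - 1) * (q + 1) = q * q - 1 := by
    rcases Nat.exists_eq_succ_of_ne_zero (by omega : q ≠ 0) with ⟨k, hk⟩
    rw [hk, Nat.succ_sub_one]
    symm
    apply Nat.sub_eq_of_eq_add
    simp only [Nat.succ_eq_add_one]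
    ring
  have hmul'' : (q + 1) * (q - 1) = q * q - 1 := by rw [mul_comm]; exact hmul'
  have himsub : S.image (fun x => x ^ (q + 1)) ⊆ S1 := by
    intro u hu
    obtain ⟨x, hx, rfl⟩ := Finset.mem_image.1 hu
    have hx0 : x ≠ 0 := (Finset.mem_filter.1 hx).2
    refine Finset.mem_filter.2 ⟨Finset.mem_univ _, pow_ne_zero _ hx0, ?_⟩
    rw [← pow_mul]
    have hpc := FiniteField.pow_card_sub_one_eq_one x hx0
    rw [hcard] at hpc
    rw [hmul'', hpc]
  have hsum_fib := Finset.card_eq_sum_card_image (fun x : F => x ^ (q + 1)) S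
  have himne : ∀ b ∈ S.image (fun x : F => x ^ (q + 1)), b ≠ 0 := by
    intro b hb
    exact (Finset.mem_filter.1 (himsub hb)).2.1
  have hsum_le : q * q - 1 ≤ (S.image (fun x : F => x ^ (q + 1))).card * (q + 1) := by
    rw [← hScard, hsum_fib]
    calc ∑ b ∈ S.image (fun x : F => x ^ (q + 1)), (S.filter (fun x => x ^ (q + 1) = b)).card
        ≤ ∑ _b ∈ S.image (fun x : F => x ^ (q + 1)), (q + 1) :=
          Finset.sum_le_sum (fun b hb => hfib_le b (himne b hb))
      _ = (S.image (fun x : F => x ^ (q + 1))).card * (q + 1) := by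
          rw [Finset.sum_const, smul_eq_mul]
  have himcard : (S.image (fun x : F => x ^ (q + 1))).card = q - 1 := by
    have h2 : (S.image (fun x : F => x ^ (q + 1))).card ≤ q - 1 :=
      le_trans (Finset.card_le_card himsub) hS1le
    have h3 : q - 1 ≤ (S.image (fun x : F => x ^ (q + 1))).card :=
      Nat.le_of_mul_le_mul_right (by rw [hmul']; exact hsum_le) (by omega)
    omega
  have himeq : S.image (fun x : F => x ^ (q + 1)) = S1 :=
    Finset.eq_of_subset_of_card_le himsub (by omega)
  have hfib_eq : ∀ b ∈ S.image (fun x : F => x ^ (q + 1)),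
      (S.filter (fun x => x ^ (q + 1) = b)).card = q + 1 := by
    by_contra h
    push_neg at h
    obtain ⟨b0, hb0, hne⟩ := h
    have hlt : (S.filter (fun x => x ^ (q + 1) = b0)).card < q + 1 :=
      lt_of_le_of_ne (hfib_le b0 (himne b0 hb0)) hne
    have hst : ∑ b ∈ S.image (fun x : F => x ^ (q + 1)),
        (S.filter (fun x => x ^ (q + 1) = b)).card
        < ∑ _b ∈ S.image (fun x : F => x ^ (q + 1)), (q + 1) :=
      Finset.sum_lt_sum (fun b hb => hfib_le b (himne b hb)) ⟨b0, hb0, hlt⟩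
    rw [Finset.sum_const, smul_eq_mul, himcard, ← hsum_fib, hmul'] at hst
    omega
  -- the subfield K as a finset
  set K : Finset F := Finset.univ.filter (fun u : F => u ^ q = u) with hKdef
  have hq10 : q - 1 + 1 = q := by omega
  have hKS1 : K = insert 0 S1 := by
    ext u
    simp only [hKdef, hS1def, Finset.mem_filter, Finset.mem_univ, true_and, Finset.mem_insert]
    constructor
    · intro h
      rcases eq_or_ne u 0 with rfl | hu
      · exact Or.inl rfl
      · refine Or.inr ⟨hu, ?_⟩
        have h2 : u ^ (q - 1) * u = 1 * u := by
          rw [← pow_succ, hq10, h, one_mul]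
        exact mul_right_cancel₀ hu h2
    · rintro (rfl | ⟨hu, h1⟩)
      · simp [zero_pow (by omega : q ≠ 0)]
      · rw [← hq10, pow_succ, h1, one_mul]
  have h0S1 : (0 : F) ∉ S1 := by
    simp [hS1def]
  have hS1card : S1.card = q - 1 := by rw [← himcard, himeq]
  have hKcard : K.card = q := by
    rw [hKS1, Finset.card_insert_of_notMem h0S1, hS1card]
    omega
  -- existence of w in K with nonzero "half trace"
  have hPsum : ∃ w : F, w ^ q = w ∧ (∑ i ∈ Finset.range n, w ^ p ^ i) ≠ 0 := by
    by_contra h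
    push_neg at h
    set P : Polynomial F := ∑ i ∈ Finset.range n, X ^ p ^ i with hPdef
    have hPco : P.coeff (p ^ (n - 1)) = 1 := by
      rw [hPdef, finset_sum_coeff]
      rw [Finset.sum_eq_single (n - 1)]
      · simp [coeff_X_pow]
      · intro i hi hine
        have hne2 : p ^ (n - 1) ≠ p ^ i := fun hh => hine (Nat.pow_right_injective hp.two_le hh).symm
        simp [coeff_X_pow, hne2]
      · intro hnot
        exact absurd (Finset.mem_range.2 (by omega)) hnot
    have hPne : P ≠ 0 := by
      intro h0
      rw [h0, coeff_zero] at hPco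
      exact one_ne_zero hPco.symm
    have hdeg : P.natDegree ≤ p ^ (n - 1) := by
      rw [hPdef]
      apply Polynomial.natDegree_sum_le_of_forall_le
      intro i hi
      have hi' := Finset.mem_range.1 hi
      rw [natDegree_X_pow]
      exact Nat.pow_le_pow_right hp.one_lt.le (by omega)
    have hcards : K.card ≤ P.natDegree := by
      apply card_le_natDegree hPne
      intro x hx
      have hxK : x ^ q = x := (Finset.mem_filter.1 hx).2
      have := h x hxK
      rw [hPdef]
      simpa [eval_finset_sum] using this
    rw [hKcard] at hcards
    have hlt : p ^ (n - 1) < p ^ n := Nat.pow_lt_pow_right hp.one_lt (by omega)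
    rw [← hqdef] at hlt
    omega
  -- b = a + a^q is nonzero and in K
  have hbigq : ∀ z : F, z ^ (q * q) = z := fun z => by
    rw [← hcard]; exact FiniteField.pow_card z
  have hyq : (algebraMap (ZMod p) F y) ^ q = algebraMap (ZMod p) F y := by
    rw [hqdef, ← map_pow, ZMod.pow_card_pow]
  set b : F := a + a ^ q with hbdef
  have haq : a ^ q = algebraMap (ZMod p) F y * c ^ q := by
    rw [hadef, mul_pow, hyq]
  have hb0 : b ≠ 0 := by
    have hby : b = algebraMap (ZMod p) F y * (c + c ^ q) := by
      rw [hbdef, haq, hadef, mul_add]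
    rw [hby]
    exact mul_ne_zero hya hcc
  have hbK : b ^ q = b := by
    rw [hbdef, hqdef, add_pow_char_pow, ← pow_mul, ← hqdef, hbigq a]
    exact add_comm _ _
  obtain ⟨w, hwK, hwG⟩ := hPsum
  set u₀ : F := w * b⁻¹ with hu₀def
  have hu₀K : u₀ ^ q = u₀ := by rw [hu₀def, mul_pow, hwK, inv_pow, hbK]
  have hbu₀ : b * u₀ = w := by
    rw [hu₀def, mul_comm w, ← mul_assoc, mul_inv_cancel₀ hb0, one_mul]
  have hzq : (a * u₀) ^ q = a ^ q * u₀ := by rw [mul_pow, hu₀K]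
  have hTr0 : Algebra.trace (ZMod p) F (a * u₀) ≠ 0 := by
    intro h0
    have htf := trace_formula p m hp F hF (a * u₀)
    rw [h0, map_zero] at htf
    have hsplit : ∑ i ∈ Finset.range m, (a * u₀) ^ p ^ i
        = ∑ i ∈ Finset.range n, w ^ p ^ i := by
      rw [hmn, Finset.sum_range_add, ← Finset.sum_add_distrib]
      apply Finset.sum_congr rfl
      intro i hi
      have h1 : (a * u₀) ^ p ^ (n + i) = (a ^ q * u₀) ^ p ^ i := by
        rw [pow_add, pow_mul, ← hqdef, hzq]
      rw [h1, ← add_pow_char_pow, ← add_mul, ← hbdef, hbu₀]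
    rw [hsplit] at htf
    exact hwG htf.symm
  have hψu : ψ (a * u₀) ≠ 1 := by
    simp only [hψdef]
    apply hω.pow_ne_one_of_pos_of_lt
    · exact (fun hh => hTr0 (by rwa [ZMod.val_eq_zero] at hh))
    · exact ZMod.val_lt _
  have hu₀mem : u₀ ∈ K := Finset.mem_filter.2 ⟨Finset.mem_univ _, hu₀K⟩
  have hshift : ∑ u ∈ K, ψ (a * (u + u₀)) = ∑ u ∈ K, ψ (a * u) := by
    apply Finset.sum_nbij' (i := fun u => u + u₀) (j := fun u => u - u₀)
    · intro u hu
      have huK : u ^ q = u := (Finset.mem_filter.1 hu).2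
      refine Finset.mem_filter.2 ⟨Finset.mem_univ _, ?_⟩
      rw [hqdef, add_pow_char_pow, ← hqdef, huK, hu₀K]
    · intro u hu
      have huK : u ^ q = u := (Finset.mem_filter.1 hu).2
      refine Finset.mem_filter.2 ⟨Finset.mem_univ _, ?_⟩
      rw [hqdef, sub_pow_char_pow, ← hqdef, huK, hu₀K]
    · intro u _; exact add_sub_cancel_right u u₀
    · intro u _; exact sub_add_cancel u u₀
    · intro u _; rfl
  have hT : ∑ u ∈ K, ψ (a * u) = 0 := by
    have h2 : ∑ u ∈ K, ψ (a * (u + u₀)) = (∑ u ∈ K, ψ (a * u)) * ψ (a * u₀) := by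
      rw [Finset.sum_mul]
      apply Finset.sum_congr rfl
      intro u _
      rw [mul_add, hψadd]
    rw [h2] at hshift
    by_contra hTne
    exact hψu (mul_left_cancel₀ hTne (by rw [mul_one]; exact hshift))
  have hsumS1 : ∑ u ∈ S1, ψ (a * u) = -1 := by
    have h3 := hT
    rw [hKS1, Finset.sum_insert h0S1, mul_zero, hψ0] at h3
    linear_combination h3
  show ∑ x ∈ S, ψ (a * x ^ (q + 1)) = -1 - (p : ℂ) ^ n
  calc ∑ x ∈ S, ψ (a * x ^ (q + 1))
      = ∑ u ∈ S.image (fun x : F => x ^ (q + 1)),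
          (S.filter (fun x => x ^ (q + 1) = u)).card • ψ (a * u) :=
        Finset.sum_comp (fun u => ψ (a * u)) (fun x => x ^ (q + 1))
    _ = ∑ u ∈ S.image (fun x : F => x ^ (q + 1)), (q + 1) • ψ (a * u) := by
        refine Finset.sum_congr rfl ?_
        intro u hu
        rw [hfib_eq u hu]
    _ = (q + 1) • ∑ u ∈ S1, ψ (a * u) := by rw [himeq, ← Finset.smul_sum]
    _ = -1 - (p : ℂ) ^ n := by
        rw [hsumS1, nsmul_eq_mul, hqdef]
        push_cast
        ring
end

section
/- Let p be an odd prime and m an even positive integer. If c ∈ F_{p^m} satisfies c + c^{p^{m/2}} ≠ 0, then the number of x ∈ F_{p^m}^* with Tr(c·x^{p^{m/2}+1}) = 0 equals p^{m-1} - (p-1)p^{(m-2)/2} - 1. -/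
open Finset Polynomial

lemma aux_card_roots_le {F : Type} [Field F] [Fintype F] [DecidableEq F]
    (f : F[X]) (hf : f ≠ 0) :
    (Finset.univ.filter fun x : F => f.eval x = 0).card ≤ f.natDegree := by
  calc (Finset.univ.filter fun x : F => f.eval x = 0).card
      ≤ f.roots.toFinset.card := by
        apply Finset.card_le_card
        intro x hx
        rw [Finset.mem_filter] at hx
        rw [Multiset.mem_toFinset, mem_roots hf]
        exact hx.2
    _ ≤ Multiset.card f.roots := Multiset.toFinset_card_le _
    _ ≤ f.natDegree := f.card_roots'

lemma aux_card_pow_eq_one {F : Type} [Field F] [Fintype F] [DecidableEq F]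
    {k : ℕ} (hk : 0 < k) (hdvd : k ∣ Fintype.card F - 1) :
    (Finset.univ.filter fun x : F => x ^ k = 1).card = k := by
  obtain ⟨g, hg⟩ := IsCyclic.exists_ofOrder_eq_natCard (α := Fˣ)
  rw [Nat.card_eq_fintype_card, Fintype.card_units] at hg
  have hcard2 : 1 < Fintype.card F := Fintype.one_lt_card
  have hord : orderOf (g ^ (orderOf g / k)) = k := by
    apply orderOf_pow_orderOf_div
    · rw [hg]; omega
    · rw [hg]; exact hdvd
  have hprim : IsPrimitiveRoot ((g ^ (orderOf g / k) : Fˣ) : F) k := by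
    rw [IsPrimitiveRoot.coe_units_iff]
    have := IsPrimitiveRoot.orderOf (g ^ (orderOf g / k))
    rwa [hord] at this
  have h1 : (Finset.univ.filter fun x : F => x ^ k = 1) = nthRootsFinset k (1 : F) := by
    ext x
    rw [Finset.mem_filter, mem_nthRootsFinset hk (1 : F)]
    simp
  rw [h1, hprim.card_nthRootsFinset]

lemma aux_trace_sum (p : ℕ) [Fact p.Prime] (F : Type) [Field F] [Fintype F] [DecidableEq F]
    [Algebra (ZMod p) F] (m : ℕ) (hm : 0 < m) (hF : Fintype.card F = p ^ m) (x : F) :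
    algebraMap (ZMod p) F (Algebra.trace (ZMod p) F x) = ∑ i ∈ Finset.range m, x ^ p ^ i := by
  have hp : p.Prime := Fact.out
  have hchar : CharP F p := (Algebra.charP_iff (ZMod p) F p).mp (ZMod.charP p)
  have hfd : FiniteDimensional (ZMod p) F := Module.Finite.of_finite
  let f : F →ₐ[ZMod p] F :=
    { frobenius F p with
      commutes' := fun r => by
        simp only [frobenius_def, RingHom.toMonoidHom_eq_coe, OneHom.toFun_eq_coe,
          MonoidHom.toOneHom_coe, MonoidHom.coe_coe]
        rw [← map_pow, ZMod.pow_card] }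
  have hfbij : Function.Bijective f :=
    (Fintype.bijective_iff_injective_and_card f).mpr ⟨f.injective, rfl⟩
  let φ : F ≃ₐ[ZMod p] F := AlgEquiv.ofBijective f hfbij
  have hφ : ∀ y : F, φ y = y ^ p := fun y => rfl
  have hφpow : ∀ (i : ℕ) (y : F), (φ ^ i) y = y ^ p ^ i := by
    intro i
    induction i with
    | zero => intro y; simp
    | succ i ih =>
      intro y
      rw [pow_succ, AlgEquiv.mul_apply, hφ, ih, ← pow_mul]
      congr 1
      rw [pow_succ]
      ring
  have hfinrank : Module.finrank (ZMod p) F = m := by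
    have h := Module.card_eq_pow_finrank (K := ZMod p) (V := F)
    rw [ZMod.card, hF] at h
    exact (Nat.pow_right_injective hp.two_le h.symm)
  have hcardaut : Fintype.card (F ≃ₐ[ZMod p] F) = m := by
    rw [← Nat.card_eq_fintype_card, IsGalois.card_aut_eq_finrank, hfinrank]
  have hord : orderOf φ = m := by
    have hdvd : orderOf φ ∣ m := by
      rw [← hcardaut]; exact orderOf_dvd_card
    rcases Nat.lt_or_ge (orderOf φ) m with hlt | hge
    · exfalso
      set d := orderOf φ with hd
      have hdpos : 0 < d := orderOf_pos φ
      have hall : ∀ y : F, y ^ p ^ d = y := by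
        intro y
        have h1 := pow_orderOf_eq_one φ
        have h2 : (φ ^ d) y = y := by rw [h1]; rfl
        rwa [hφpow] at h2
      have hroots : (Finset.univ.filter fun y : F => (X ^ p ^ d - X : F[X]).eval y = 0).card
          ≤ p ^ d := by
        have := aux_card_roots_le (F := F) (X ^ p ^ d - X)
          (FiniteField.X_pow_card_pow_sub_X_ne_zero F hdpos.ne' hp.one_lt)
        rwa [FiniteField.X_pow_card_pow_sub_X_natDegree_eq F hdpos.ne' hp.one_lt] at this
      have hfull : (Finset.univ.filter fun y : F => (X ^ p ^ d - X : F[X]).eval y = 0)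
          = Finset.univ := by
        apply Finset.eq_univ_iff_forall.mpr
        intro y
        simp [hall y]
      rw [hfull, Finset.card_univ, hF] at hroots
      exact absurd (Nat.pow_le_pow_iff_right hp.one_lt |>.mp hroots) (by omega)
    · exact le_antisymm (Nat.le_of_dvd hm hdvd) hge
  have hinj : Function.Injective (fun i : Fin m => φ ^ (i : ℕ)) := by
    intro i j hij
    simp only at hij
    rw [pow_inj_mod, hord, Nat.mod_eq_of_lt i.2, Nat.mod_eq_of_lt j.2] at hij
    exact Fin.ext hij
  have hbij : Function.Bijective (fun i : Fin m => φ ^ (i : ℕ)) := by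
    rw [Fintype.bijective_iff_injective_and_card]
    exact ⟨hinj, by simp [hcardaut]⟩
  rw [trace_eq_sum_automorphisms]
  rw [← Function.Bijective.sum_comp hbij (fun σ => σ x)]
  rw [← Fin.sum_univ_eq_sum_range (fun i => x ^ p ^ i) m]
  exact Finset.sum_congr rfl fun i _ => hφpow i x

theorem stmt_1 (p m : ℕ) (hp : p.Prime) (hp2 : p ≠ 2) (hm : 0 < m) (hme : Even m)
    (F : Type) [Field F] [Fintype F] [DecidableEq F] [Algebra (ZMod p) F]
    (hF : Fintype.card F = p ^ m)
    (c : F) (hcc : c + c ^ (p ^ (m / 2)) ≠ 0) :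
    ((Finset.univ.filter (fun x : F => x ≠ 0 ∧
        Algebra.trace (ZMod p) F (c * x ^ (p ^ (m / 2) + 1)) = 0)).card : ℤ)
      = (p : ℤ) ^ (m - 1) - ((p : ℤ) - 1) * (p : ℤ) ^ ((m - 2) / 2) - 1 := by
  haveI hpfact : Fact p.Prime := ⟨hp⟩
  have hchar : CharP F p := (Algebra.charP_iff (ZMod p) F p).mp (ZMod.charP p)
  obtain ⟨n, hmeq⟩ := hme
  have hn : 0 < n := by omega
  have hm2 : m / 2 = n := by omega
  have hm2n : m = 2 * n := by omega
  rw [hm2] at hcc ⊢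
  set q : ℕ := p ^ n with hqdef
  have hq1 : 1 < q := Nat.one_lt_pow hn.ne' hp.one_lt
  have hFq : Fintype.card F = q * q := by rw [hF, hm2n]; ring
  have hsq : ∀ a : ℕ, 1 ≤ a → a * a - 1 = (a + 1) * (a - 1) := by
    intro a ha
    obtain ⟨r, rfl⟩ : ∃ r, a = r + 1 := ⟨a - 1, by omega⟩
    have h1 : (r + 1) * (r + 1) = r * r + 2 * r + 1 := by ring
    have h2 : (r + 1 + 1) * (r + 1 - 1) = r * r + 2 * r := by
      simp only [Nat.add_sub_cancel]
      ring
    omega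
  have hcardsub : Fintype.card F - 1 = (q + 1) * (q - 1) := by
    rw [hFq]
    exact hsq q (by omega)
  have hpowcard : ∀ x : F, x ^ (q * q) = x := fun x => by
    rw [← hFq]; exact FiniteField.pow_card x
  -- trace facts
  have halg_inj : Function.Injective (algebraMap (ZMod p) F) := (algebraMap (ZMod p) F).injective
  have htr : ∀ x : F, algebraMap (ZMod p) F (Algebra.trace (ZMod p) F x)
      = ∑ i ∈ Finset.range m, x ^ p ^ i := aux_trace_sum p F m hm hF
  have hpm : ∀ x : F, x ^ p ^ m = x := fun x => by rw [← hF]; exact FiniteField.pow_card x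
  have htr_frob : ∀ x : F, Algebra.trace (ZMod p) F (x ^ p) = Algebra.trace (ZMod p) F x := by
    intro x
    apply halg_inj
    rw [htr, htr]
    have h1 : ∀ i : ℕ, (x ^ p) ^ p ^ i = x ^ p ^ (i + 1) := by
      intro i; rw [← pow_mul]; congr 1; rw [pow_succ]; ring
    have h2 := Finset.sum_range_succ' (fun i => x ^ p ^ i) m
    have h3 := Finset.sum_range_succ (fun i => x ^ p ^ i) m
    calc ∑ i ∈ Finset.range m, (x ^ p) ^ p ^ i
        = ∑ i ∈ Finset.range m, x ^ p ^ (i + 1) := Finset.sum_congr rfl fun i _ => h1 i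
      _ = ∑ i ∈ Finset.range m, x ^ p ^ i := by
          have h4 : x ^ p ^ m = x ^ p ^ 0 := by rw [hpm, pow_zero, pow_one]
          have h5 : (∑ i ∈ Finset.range m, x ^ p ^ (i + 1)) + x ^ p ^ 0
              = (∑ i ∈ Finset.range m, x ^ p ^ i) + x ^ p ^ m := by
            rw [← h2, h3]
          rw [h4] at h5
          exact add_right_cancel h5
  have htrq : ∀ (k : ℕ) (x : F), Algebra.trace (ZMod p) F (x ^ p ^ k)
      = Algebra.trace (ZMod p) F x := by
    intro k
    induction k with
    | zero => intro x; simp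
    | succ k ih =>
      intro x
      have : x ^ p ^ (k + 1) = (x ^ p ^ k) ^ p := by
        rw [← pow_mul, pow_succ]
      rw [this, htr_frob, ih]
  -- 2 ≠ 0
  have h2Zp : (2 : ZMod p) ≠ 0 := by
    intro h
    have : ((2 : ℕ) : ZMod p) = 0 := by exact_mod_cast h
    rw [ZMod.natCast_eq_zero_iff] at this
    exact hp2 ((Nat.prime_dvd_prime_iff_eq hp Nat.prime_two).mp this)
  have h2F : (2 : F) ≠ 0 := by
    intro h
    have : ((2 : ℕ) : F) = 0 := by exact_mod_cast h
    rw [CharP.cast_eq_zero_iff F p] at this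
    exact hp2 ((Nat.prime_dvd_prime_iff_eq hp Nat.prime_two).mp this)
  -- generator of units
  obtain ⟨g, hg⟩ := IsCyclic.exists_ofOrder_eq_natCard (α := Fˣ)
  rw [Nat.card_eq_fintype_card, Fintype.card_units, hFq] at hg
  -- surjectivity of x ↦ x^(q+1) onto {t ≠ 0 : t^q = t}
  have hsurj : ∀ t : F, t ≠ 0 → t ^ q = t → ∃ x : F, x ≠ 0 ∧ x ^ (q + 1) = t := by
    intro t ht htq
    have htq1 : t ^ (q - 1) = 1 := by
      have h1 : t ^ (q - 1) * t = t ^ q := by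
        rw [← pow_succ]; congr 1; omega
      rw [htq] at h1
      field_simp at h1
      exact h1
    have hmem : Units.mk0 t ht ∈ Subgroup.zpowers g := by
      have htop : Subgroup.zpowers g = ⊤ := by
        apply Subgroup.eq_top_of_card_eq
        rw [Nat.card_zpowers, hg, Nat.card_eq_fintype_card, Fintype.card_units, hFq]
      rw [htop]; trivial
    obtain ⟨j, hj0⟩ := mem_powers_iff_mem_zpowers.mpr hmem
    have hj : g ^ j = Units.mk0 t ht := hj0
    have htu : (Units.mk0 t ht) ^ (q - 1) = 1 := by
      ext
      push_cast
      exact htq1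
    have hgj : g ^ (j * (q - 1)) = 1 := by rw [pow_mul, hj, htu]
    have hdvd : (q * q - 1) ∣ j * (q - 1) := by
      rw [← hg]; exact orderOf_dvd_of_pow_eq_one hgj
    have hfac : q * q - 1 = (q + 1) * (q - 1) := by rw [← hFq]; exact hcardsub
    rw [hfac] at hdvd
    have hq1dvd : (q + 1) ∣ j := by
      have h0 : 0 < q - 1 := by omega
      have h1 : (q - 1) * (q + 1) ∣ (q - 1) * j := by
        rw [mul_comm (q - 1) (q + 1), mul_comm (q - 1) j] at *
        exact hdvd
      exact (mul_dvd_mul_iff_left h0.ne').mp h1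
    obtain ⟨j', hj'⟩ := hq1dvd
    refine ⟨((g ^ j' : Fˣ) : F), Units.ne_zero _, ?_⟩
    have hje : ((g ^ j' : Fˣ) : F) ^ (q + 1) = ((g ^ j : Fˣ) : F) := by
      push_cast
      rw [← pow_mul]
      congr 1
      rw [hj']
      exact Nat.mul_comm _ _
    rw [hje, hj]
    rfl
  -- fiber count
  have hdvd1 : (q + 1) ∣ Fintype.card F - 1 := by rw [hcardsub]; exact Dvd.intro _ rfl
  have hfiber : ∀ t : F, t ≠ 0 → t ^ q = t →
      (Finset.univ.filter fun x : F => x ^ (q + 1) = t).card = q + 1 := by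
    intro t ht htq
    obtain ⟨x₀, hx₀ne, hx₀⟩ := hsurj t ht htq
    have hbj : (Finset.univ.filter fun u : F => u ^ (q + 1) = 1).card
        = (Finset.univ.filter fun x : F => x ^ (q + 1) = t).card := by
      apply Finset.card_bij (fun u _ => u * x₀)
      · intro u hu
        rw [Finset.mem_filter] at hu ⊢
        exact ⟨Finset.mem_univ _, by rw [mul_pow, hu.2, one_mul, hx₀]⟩
      · intro u1 _ u2 _ h
        exact mul_right_cancel₀ hx₀ne h
      · intro y hy
        rw [Finset.mem_filter] at hy
        refine ⟨y * x₀⁻¹, ?_, ?_⟩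
        · rw [Finset.mem_filter]
          refine ⟨Finset.mem_univ _, ?_⟩
          rw [mul_pow, hy.2, inv_pow, hx₀]
          field_simp
        · field_simp
    rw [← hbj]
    exact aux_card_pow_eq_one (show 0 < q + 1 by omega) hdvd1
  -- partition
  set A := Finset.univ.filter (fun x : F => x ≠ 0 ∧
      Algebra.trace (ZMod p) F (c * x ^ (q + 1)) = 0) with hA
  set B := Finset.univ.filter (fun t : F => t ^ q = t ∧ t ≠ 0 ∧
      Algebra.trace (ZMod p) F (c * t) = 0) with hB
  have hq2_id : ∀ x : F, (x ^ (q + 1)) ^ q = x ^ (q + 1) := by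
    intro x
    rw [← pow_mul]
    have h1 : (q + 1) * q = q * q + q := by ring
    rw [h1, pow_add, hpowcard x, pow_succ, mul_comm]
  have hAB : A = B.biUnion (fun t => Finset.univ.filter fun x : F => x ^ (q + 1) = t) := by
    ext x
    simp only [hA, hB, Finset.mem_biUnion, Finset.mem_filter, Finset.mem_univ, true_and]
    constructor
    · rintro ⟨hx0, hxtr⟩
      exact ⟨x ^ (q + 1), ⟨hq2_id x, pow_ne_zero _ hx0, hxtr⟩, rfl⟩
    · rintro ⟨t, ⟨htq, ht0, httr⟩, hxt⟩
      constructor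
      · intro rfl'
        apply ht0
        rw [← hxt, rfl']
        exact zero_pow (by omega)
      · rw [hxt]; exact httr
  have hdisj : ∀ t1 ∈ B, ∀ t2 ∈ B, t1 ≠ t2 →
      Disjoint (Finset.univ.filter fun x : F => x ^ (q + 1) = t1)
        (Finset.univ.filter fun x : F => x ^ (q + 1) = t2) := by
    intro t1 _ t2 _ hne
    rw [Finset.disjoint_left]
    intro x hx1 hx2
    rw [Finset.mem_filter] at hx1 hx2
    exact hne (hx1.2 ▸ hx2.2 ▸ rfl)
  have hcardA : A.card = B.card * (q + 1) := by
    rw [hAB, Finset.card_biUnion hdisj]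
    calc ∑ t ∈ B, (Finset.univ.filter fun x : F => x ^ (q + 1) = t).card
        = ∑ _t ∈ B, (q + 1) := by
          apply Finset.sum_congr rfl
          intro t ht
          simp only [hB, Finset.mem_filter] at ht
          exact hfiber t ht.2.2.1 ht.2.1
      _ = B.card * (q + 1) := by rw [Finset.sum_const, smul_eq_mul]
  -- reduce B to B'
  set d := c + c ^ q with hd
  have hd0 : d ≠ 0 := hcc
  have hcq2 : c ^ (q * q) = c := hpowcard c
  have hdq : d ^ q = d := by
    rw [hd, hqdef, add_pow_char_pow, ← hqdef, ← pow_mul, hcq2, add_comm]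
  have hkey : ∀ t : F, t ^ q = t → Algebra.trace (ZMod p) F (d * t)
      = 2 * Algebra.trace (ZMod p) F (c * t) := by
    intro t htq
    have h1 : Algebra.trace (ZMod p) F (c ^ q * t) = Algebra.trace (ZMod p) F (c * t) := by
      have h2 : (c * t) ^ p ^ n = c ^ q * t := by
        rw [mul_pow, ← hqdef, htq]
      rw [← h2, htrq n (c * t)]
    have h3 : d * t = c * t + c ^ q * t := by rw [hd]; ring
    rw [h3, map_add, h1, two_mul]
  have hiff : ∀ t : F, t ^ q = t →
      (Algebra.trace (ZMod p) F (c * t) = 0 ↔ Algebra.trace (ZMod p) F (d * t) = 0) := by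
    intro t htq
    rw [hkey t htq]
    constructor
    · intro h; rw [h, mul_zero]
    · intro h
      rcases mul_eq_zero.mp h with h' | h'
      · exact absurd h' h2Zp
      · exact h'
  set B' := Finset.univ.filter (fun s : F => s ^ q = s ∧ s ≠ 0 ∧
      Algebra.trace (ZMod p) F s = 0) with hB'
  have hBB' : B.card = B'.card := by
    apply Finset.card_bij (fun t _ => d * t)
    · intro t ht
      rw [hB, Finset.mem_filter] at ht
      obtain ⟨-, htq, ht0, httr⟩ := ht
      rw [hB', Finset.mem_filter]
      refine ⟨Finset.mem_univ _, ?_, mul_ne_zero hd0 ht0, ?_⟩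
      · rw [mul_pow, hdq, htq]
      · exact (hiff t htq).mp httr
    · intro t1 _ t2 _ h
      exact mul_left_cancel₀ hd0 h
    · intro s hs
      rw [hB', Finset.mem_filter] at hs
      obtain ⟨-, hsq, hs0, hstr⟩ := hs
      refine ⟨d⁻¹ * s, ?_, ?_⟩
      · rw [hB, Finset.mem_filter]
        refine ⟨Finset.mem_univ _, ?_, mul_ne_zero (inv_ne_zero hd0) hs0, ?_⟩
        · rw [mul_pow, inv_pow, hdq, hsq]
        · apply (hiff (d⁻¹ * s) (by rw [mul_pow, inv_pow, hdq, hsq])).mpr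
          rw [← mul_assoc, mul_inv_cancel₀ hd0, one_mul]
          exact hstr
      · rw [← mul_assoc, mul_inv_cancel₀ hd0, one_mul]
  -- B' related to S0
  set S0 := Finset.univ.filter (fun s : F => s ^ q = s ∧
      Algebra.trace (ZMod p) F s = 0) with hS0
  have h0S0 : (0 : F) ∈ S0 := by
    rw [hS0, Finset.mem_filter]
    exact ⟨Finset.mem_univ _, zero_pow (by omega), by simp⟩
  have hB'S0 : B' = S0.erase 0 := by
    ext s
    rw [hB', hS0, Finset.mem_erase, Finset.mem_filter, Finset.mem_filter]
    tauto
  have hcardB' : B'.card = S0.card - 1 := by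
    rw [hB'S0, Finset.card_erase_of_mem h0S0]
  -- SF count
  set SF := Finset.univ.filter (fun s : F => s ^ q = s) with hSF
  have hdvdq1 : (q - 1) ∣ Fintype.card F - 1 := by rw [hcardsub]; exact Dvd.intro_left _ rfl
  have hSFcard : SF.card = q := by
    have h1 : SF = insert (0 : F) (Finset.univ.filter fun s : F => s ^ (q - 1) = 1) := by
      ext s
      rw [hSF, Finset.mem_insert, Finset.mem_filter, Finset.mem_filter]
      constructor
      · rintro ⟨-, hs⟩
        by_cases h0 : s = 0
        · exact Or.inl h0
        · right
          refine ⟨Finset.mem_univ _, ?_⟩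
          have h2 : s ^ (q - 1) * s = s ^ q := by
            rw [← pow_succ]; congr 1; omega
          rw [hs] at h2
          field_simp at h2
          exact h2
      · rintro (rfl | ⟨-, h1⟩)
        · exact ⟨Finset.mem_univ _, zero_pow (by omega)⟩
        · refine ⟨Finset.mem_univ _, ?_⟩
          have h2 : s ^ q = s ^ (q - 1) * s := by
            rw [← pow_succ]; congr 1; omega
          rw [h2, h1, one_mul]
    rw [h1, Finset.card_insert_of_notMem, aux_card_pow_eq_one (by omega) hdvdq1]
    · omega
    · rw [Finset.mem_filter]
      rintro ⟨-, h⟩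
      rw [zero_pow (by omega)] at h
      exact zero_ne_one h
  -- existence of s with nonzero trace
  have hex : ∃ s : F, s ^ q = s ∧ Algebra.trace (ZMod p) F s ≠ 0 := by
    by_contra hcon
    push_neg at hcon
    set Pf : F[X] := ∑ i ∈ Finset.range n, X ^ p ^ i with hPf
    have hPfdeg : Pf.natDegree ≤ p ^ (n - 1) := by
      apply Polynomial.natDegree_sum_le_of_forall_le
      intro i hi
      rw [Polynomial.natDegree_X_pow]
      exact Nat.pow_le_pow_right hp.pos (by rw [Finset.mem_range] at hi; omega)
    have hPfne : Pf ≠ 0 := by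
      intro h
      have hcoeff : Pf.coeff (p ^ (n - 1)) = 1 := by
        rw [hPf, Polynomial.finset_sum_coeff]
        have hterm : ∀ i ∈ Finset.range n,
            (X ^ p ^ i : F[X]).coeff (p ^ (n - 1)) = if i = n - 1 then (1 : F) else 0 := by
          intro i _
          rw [Polynomial.coeff_X_pow]
          by_cases h' : i = n - 1
          · simp [h']
          · rw [if_neg, if_neg h']
            intro he
            exact h' (Nat.pow_right_injective hp.two_le he.symm)
        rw [Finset.sum_congr rfl hterm,
          Finset.sum_ite_eq' (Finset.range n) (n - 1) (fun _ => (1 : F)),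
          if_pos (Finset.mem_range.mpr (by omega))]
      rw [h, Polynomial.coeff_zero] at hcoeff
      exact zero_ne_one hcoeff
    have hroot : ∀ s : F, s ^ q = s → Pf.eval s = 0 := by
      intro s hs
      have heval : Pf.eval s = ∑ i ∈ Finset.range n, s ^ p ^ i := by
        rw [hPf, Polynomial.eval_finset_sum]
        exact Finset.sum_congr rfl fun i _ => by rw [Polynomial.eval_pow, Polynomial.eval_X]
      have htrs := htr s
      rw [hcon s hs, map_zero] at htrs
      have hshift : ∀ i : ℕ, s ^ p ^ (n + i) = s ^ p ^ i := by
        intro i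
        rw [pow_add, pow_mul, (show s ^ p ^ n = s from hs)]
      have hsplit : (0 : F) = 2 * ∑ i ∈ Finset.range n, s ^ p ^ i := by
        rw [htrs]
        have : m = n + n := by omega
        rw [this, Finset.sum_range_add]
        rw [Finset.sum_congr rfl (fun i _ => hshift i)]
        ring
      have h2 : ∑ i ∈ Finset.range n, s ^ p ^ i = 0 := by
        rcases mul_eq_zero.mp hsplit.symm with h' | h'
        · exact absurd h' h2F
        · exact h'
      rw [heval, h2]
    have hsub : SF ⊆ Finset.univ.filter fun s : F => Pf.eval s = 0 := by
      intro s hs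
      rw [hSF, Finset.mem_filter] at hs
      rw [Finset.mem_filter]
      exact ⟨Finset.mem_univ _, hroot s hs.2⟩
    have hle : SF.card ≤ p ^ (n - 1) :=
      le_trans (Finset.card_le_card hsub) (le_trans (aux_card_roots_le Pf hPfne) hPfdeg)
    rw [hSFcard] at hle
    have : p ^ (n - 1) < q := by
      rw [hqdef]
      exact Nat.pow_lt_pow_right hp.one_lt (by omega)
    omega
  -- additive subgroup G
  have hqodd : Odd q := (hp.odd_of_ne_two hp2).pow
  let G : AddSubgroup F :=
    { carrier := {s : F | s ^ q = s}
      add_mem' := by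
        intro a b ha hb
        simp only [Set.mem_setOf_eq] at ha hb ⊢
        exact (add_pow_char_pow a b p n).trans (by rw [← hqdef, ha, hb])
      zero_mem' := by
        simp only [Set.mem_setOf_eq]
        exact zero_pow (by omega)
      neg_mem' := by
        intro a ha
        simp only [Set.mem_setOf_eq] at ha ⊢
        rw [hqodd.neg_pow, ha] }
  have hGmem : ∀ s : F, s ∈ G ↔ s ^ q = s := fun s => Iff.rfl
  letI instG : Fintype G := Fintype.ofFinset SF (by
    intro s
    rw [hSF, Finset.mem_filter]
    simp [hGmem])
  have hGcard : Nat.card G = q := by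
    rw [Nat.card_eq_fintype_card, ← hSFcard]
    exact Fintype.card_ofFinset _ _
  let ψ : G →+ ZMod p := AddMonoidHom.mk' (fun s => Algebra.trace (ZMod p) F s.1)
    (fun a b => by simp [map_add])
  have hψsurj : Function.Surjective ψ := by
    haveI : Fact (Nat.Prime (Nat.card (ZMod p))) := by rw [Nat.card_zmod]; exact ⟨hp⟩
    rcases AddSubgroup.eq_bot_or_eq_top_of_prime_card ψ.range with hbot | htop
    · exfalso
      obtain ⟨s₀, hs₀q, hs₀tr⟩ := hex
      have : ψ ⟨s₀, (hGmem s₀).mpr hs₀q⟩ ∈ ψ.range := ⟨_, rfl⟩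
      rw [hbot, AddSubgroup.mem_bot] at this
      exact hs₀tr this
    · intro y
      have : y ∈ ψ.range := by rw [htop]; trivial
      obtain ⟨x, hx⟩ := this
      exact ⟨x, hx⟩
  have hkercard : Nat.card ψ.ker = p ^ (n - 1) := by
    have h1 := AddSubgroup.card_eq_card_quotient_mul_card_addSubgroup ψ.ker
    have h2 : Nat.card (G ⧸ ψ.ker) = p := by
      rw [Nat.card_congr (QuotientAddGroup.quotientKerEquivOfSurjective ψ hψsurj).toEquiv,
        Nat.card_zmod]
    rw [hGcard, h2] at h1
    have h3 : q = p * p ^ (n - 1) := by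
      rw [hqdef, ← pow_succ']
      congr 1
      omega
    rw [h3] at h1
    exact Nat.eq_of_mul_eq_mul_left hp.pos h1.symm
  -- card S0 = card ker
  have hS0card : S0.card = p ^ (n - 1) := by
    rw [← hkercard, Nat.card_eq_fintype_card]
    have he : ψ.ker ≃ {s : F // s ^ q = s ∧ Algebra.trace (ZMod p) F s = 0} := by
      refine ⟨fun x => ⟨x.1.1, (hGmem x.1.1).mp x.1.2, AddMonoidHom.mem_ker.mp x.2⟩,
        fun s => ⟨⟨s.1, (hGmem s.1).mpr s.2.1⟩, AddMonoidHom.mem_ker.mpr s.2.2⟩, ?_, ?_⟩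
      · intro x; rfl
      · intro s; rfl
    rw [Fintype.card_congr he, Fintype.card_subtype]
  -- final computation
  rw [hcardA, hBB', hcardB', hS0card]
  have hm1 : m - 1 = 2 * n - 1 := by omega
  have hm22 : (m - 2) / 2 = n - 1 := by omega
  rw [hm1, hm22]
  obtain ⟨k, rfl⟩ : ∃ k, n = k + 1 := ⟨n - 1, by omega⟩
  have e1 : k + 1 - 1 = k := by omega
  have e2 : 2 * (k + 1) - 1 = 2 * k + 1 := by omega
  rw [e1, e2]
  have hple : 1 ≤ p ^ k := Nat.one_le_pow _ _ hp.pos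
  push_cast [Nat.cast_sub hple]
  rw [hqdef]
  push_cast
  ring
end

section
/- Let p be an odd prime, m and k positive integers with m/gcd(m,k) odd, and c ∈ F_{p^m}^*. Then the number of x ∈ F_{p^m}^* with Tr(c·x^{p^k+1}) = 0 equals the number of x ∈ F_{p^m}^* with Tr(c·x^2) = 0. -/
theorem gcd_lemma (p m k : ℕ) (hp : p.Prime) (hp2 : p ≠ 2) (hm : 0 < m) (hk : 0 < k)
    (hodd : Odd (m / Nat.gcd m k)) :
    Nat.gcd (p ^ k + 1) (p ^ m - 1) = 2 := by
  have hp1 : 1 < p := hp.one_lt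
  have hpodd : Odd p := hp.odd_of_ne_two hp2
  have hd : 0 < Nat.gcd m k := Nat.gcd_pos_of_pos_left k hm
  set d := Nat.gcd m k with hdef
  have hdm : d ∣ m := Nat.gcd_dvd_left m k
  have hdk : d ∣ k := Nat.gcd_dvd_right m k
  have hgcd2 : Nat.gcd (2 * k) m = d := by
    have h1 : d ∣ Nat.gcd (2 * k) m :=
      Nat.dvd_gcd (Dvd.dvd.mul_left hdk 2) hdm
    have h2 : Nat.gcd (2 * k) m ∣ d := by
      have e1 : Nat.gcd (2 * k) m ∣ Nat.gcd (2 * k) (2 * m) :=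
        Nat.dvd_gcd (Nat.gcd_dvd_left _ _) ((Nat.gcd_dvd_right _ _).mul_left 2)
      rw [Nat.gcd_mul_left, Nat.gcd_comm k m] at e1
      have e2 : Nat.gcd (2 * k) m ∣ Nat.gcd (2 * d) m :=
        Nat.dvd_gcd e1 (Nat.gcd_dvd_right _ _)
      have e3 : Nat.gcd (2 * d) m = d := by
        conv_lhs => rw [show m = d * (m / d) from (Nat.mul_div_cancel' hdm).symm,
          mul_comm 2 d]
        rw [Nat.gcd_mul_left, Nat.coprime_two_left.mpr hodd, mul_one]
      rwa [e3] at e2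
    exact Nat.dvd_antisymm h2 h1
  set g := Nat.gcd (p ^ k + 1) (p ^ m - 1) with hg
  have hgl : g ∣ p ^ k + 1 := Nat.gcd_dvd_left _ _
  have hgr : g ∣ p ^ m - 1 := Nat.gcd_dvd_right _ _
  have hgpos : 0 < g := Nat.gcd_pos_of_pos_left _ (Nat.succ_pos _)
  haveI : NeZero g := ⟨hgpos.ne'⟩
  have h2k : g ∣ p ^ (2 * k) - 1 := by
    have : p ^ (2 * k) - 1 = (p ^ k + 1) * (p ^ k - 1) := by
      rw [mul_comm 2 k, pow_mul]
      simpa using Nat.sq_sub_sq (p ^ k) 1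
    rw [this]
    exact hgl.mul_right _
  have key : ∀ s : ℕ, g ∣ p ^ s - 1 ↔ (p : ZMod g) ^ s = 1 := by
    intro s
    have h1 : 1 ≤ p ^ s := Nat.one_le_pow _ _ hp.pos
    rw [← ZMod.natCast_eq_zero_iff, Nat.cast_sub h1, Nat.cast_pow, Nat.cast_one,
      sub_eq_zero]
  have hxd : (p : ZMod g) ^ d = 1 := by
    rw [← hgcd2]
    exact pow_gcd_eq_one.mpr ⟨(key _).mp h2k, (key _).mp hgr⟩
  have hpd : g ∣ p ^ d - 1 := (key d).mpr hxd
  have hpk : g ∣ p ^ k - 1 := by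
    refine hpd.trans ?_
    have := Nat.sub_dvd_pow_sub_pow (p ^ d) 1 (k / d)
    rwa [one_pow, ← pow_mul, Nat.mul_div_cancel' hdk] at this
  have hdvd2 : g ∣ 2 := by
    have := Nat.dvd_sub hgl hpk
    have h1 : 1 ≤ p ^ k := Nat.one_le_pow _ _ hp.pos
    have e : (p ^ k + 1) - (p ^ k - 1) = 2 := by omega
    rwa [e] at this
  have h2dvd : 2 ∣ g := by
    refine Nat.dvd_gcd ?_ ?_
    · exact Even.two_dvd (Odd.add_one (hpodd.pow))
    · exact Even.two_dvd (Nat.Odd.sub_odd (hpodd.pow) odd_one)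
  exact Nat.dvd_antisymm hdvd2 h2dvd

section CG

open Finset

variable {G : Type*} [CommGroup G] [Fintype G] [DecidableEq G]

theorem aux_image (n : ℕ) :
    (Finset.univ.image fun x : G => x ^ n) =
    (Finset.univ.image fun x : G => x ^ Nat.gcd n (Fintype.card G)) := by
  set N := Fintype.card G
  set d := Nat.gcd n N with hd
  ext y
  simp only [Finset.mem_image, Finset.mem_univ, true_and]
  constructor
  · rintro ⟨x, rfl⟩
    exact ⟨x ^ (n / d), by rw [← pow_mul, Nat.div_mul_cancel (Nat.gcd_dvd_left _ _)]⟩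
  · rintro ⟨x, rfl⟩
    refine ⟨x ^ Nat.gcdA n N, ?_⟩
    have hb := Nat.gcd_eq_gcd_ab n N
    have hxN : x ^ (N : ℤ) = 1 := by
      rw [zpow_natCast]; exact pow_card_eq_one
    calc (x ^ Nat.gcdA n N) ^ n = x ^ (Nat.gcdA n N * n) := by
          rw [← zpow_natCast (x ^ Nat.gcdA n N), ← zpow_mul]
      _ = x ^ ((d : ℤ)) := by
          rw [hb, zpow_add, mul_comm (n:ℤ), zpow_mul, zpow_mul, hxN, one_zpow, mul_one]
      _ = x ^ d := zpow_natCast x d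

theorem fiber_card (n : ℕ) (y : G) (x₀ : G) (hx : x₀ ^ n = y) :
    (univ.filter fun x : G => x ^ n = y).card = (univ.filter fun x : G => x ^ n = 1).card := by
  apply Finset.card_bij' (fun x _ => x * x₀⁻¹) (fun z _ => z * x₀)
  · intro a ha
    simp only [mem_filter, mem_univ, true_and] at ha ⊢
    rw [mul_pow, ha, inv_pow, hx, mul_inv_cancel]
  · intro a ha
    simp only [mem_filter, mem_univ, true_and] at ha ⊢
    rw [mul_pow, ha, hx, one_mul]
  · intro a _; simp
  · intro a _; simp

theorem count_formula (n : ℕ) (P : G → Prop) [DecidablePred P] :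
    (univ.filter fun x : G => P (x ^ n)).card
      = (univ.filter fun x : G => x ^ n = 1).card *
        (((univ.image fun x : G => x ^ n)).filter P).card := by
  rw [Finset.card_eq_sum_card_fiberwise
    (f := fun x : G => x ^ n) (t := ((univ.image fun x : G => x ^ n)).filter P)
    (by intro x hx
        simp only [Finset.mem_coe, mem_filter, mem_univ, true_and] at hx ⊢
        exact ⟨mem_image_of_mem _ (mem_univ x), hx⟩)]
  rw [Finset.sum_congr rfl (fun y hy => ?_), Finset.sum_const, smul_eq_mul, mul_comm]
  simp only [mem_filter, mem_image, mem_univ, true_and] at hy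
  obtain ⟨⟨x₀, hx₀⟩, hPy⟩ := hy
  rw [← fiber_card n y x₀ hx₀]
  congr 1
  ext x
  simp only [mem_filter, mem_univ, true_and]
  constructor
  · rintro ⟨_, h⟩; exact h
  · rintro h; exact ⟨h ▸ hPy, h⟩

theorem count_pow_eq (n₁ n₂ : ℕ)
    (h : Nat.gcd n₁ (Fintype.card G) = Nat.gcd n₂ (Fintype.card G))
    (P : G → Prop) [DecidablePred P] :
    (univ.filter fun x : G => P (x ^ n₁)).card = (univ.filter fun x : G => P (x ^ n₂)).card := by
  have himg : (univ.image fun x : G => x ^ n₁) = (univ.image fun x : G => x ^ n₂) := by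
    rw [aux_image n₁, aux_image n₂, h]
  have hK : (univ.filter fun x : G => x ^ n₁ = 1).card
      = (univ.filter fun x : G => x ^ n₂ = 1).card := by
    have h1 := count_formula (G := G) n₁ (fun _ => True)
    have h2 := count_formula (G := G) n₂ (fun _ => True)
    simp only [filter_true] at h1 h2
    rw [himg] at h1
    have hpos : 0 < (univ.image fun x : G => x ^ n₂).card :=
      Finset.card_pos.mpr ⟨1 ^ n₂, mem_image_of_mem _ (mem_univ 1)⟩
    have := h1.symm.trans h2
    exact Nat.eq_of_mul_eq_mul_right hpos this
  rw [count_formula n₁ P, count_formula n₂ P, himg, hK]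

end CG
open Finset

theorem stmt_4 (p m k : ℕ) (hp : p.Prime) (hp2 : p ≠ 2) (hm : 0 < m) (hk : 0 < k)
    (hodd : Odd (m / Nat.gcd m k))
    (F : Type) [Field F] [Fintype F] [DecidableEq F] [Algebra (ZMod p) F]
    (hF : Fintype.card F = p ^ m)
    (c : F) (hc : c ≠ 0) :
    (Finset.univ.filter (fun x : F => x ≠ 0 ∧
        Algebra.trace (ZMod p) F (c * x ^ (p ^ k + 1)) = 0)).card
      = (Finset.univ.filter (fun x : F => x ≠ 0 ∧
        Algebra.trace (ZMod p) F (c * x ^ 2) = 0)).card := by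
  have transfer : ∀ n : ℕ,
      (univ.filter fun x : F => x ≠ 0 ∧ Algebra.trace (ZMod p) F (c * x ^ n) = 0).card
      = (univ.filter fun u : Fˣ =>
          Algebra.trace (ZMod p) F (c * ((u : F) ^ n)) = 0).card := by
    intro n
    rw [← Finset.card_image_of_injective _ Units.val_injective]
    congr 1
    ext x
    simp only [mem_image, mem_filter, mem_univ, true_and]
    constructor
    · rintro ⟨hx, htr⟩
      exact ⟨Units.mk0 x hx, htr, rfl⟩
    · rintro ⟨u, hu, rfl⟩
      exact ⟨Units.ne_zero u, hu⟩
  rw [transfer, transfer]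
  have hN : Fintype.card Fˣ = p ^ m - 1 := by
    rw [Fintype.card_units, hF]
  have hg1 : Nat.gcd (p ^ k + 1) (Fintype.card Fˣ) = 2 := by
    rw [hN]; exact gcd_lemma p m k hp hp2 hm hk hodd
  have hg2 : Nat.gcd 2 (Fintype.card Fˣ) = 2 := by
    rw [hN]
    refine Nat.gcd_eq_left (Even.two_dvd (Nat.Odd.sub_odd ((hp.odd_of_ne_two hp2).pow) odd_one))
  have key := count_pow_eq (G := Fˣ) (p ^ k + 1) 2 (hg1.trans hg2.symm)
    (fun y : Fˣ => Algebra.trace (ZMod p) F (c * (y : F)) = 0)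
  simpa only [Units.val_pow_eq_pow_val] using key
end

section
/- Let p be an odd prime, m even, and Q : F_{p^m} → F_p a quadratic Bent function. Then there exists ε ∈ {1,-1} such that |{x ∈ F_{p^m}^* : Q(x) = 0}| = p^{m-1} + ε(p-1)p^{(m-2)/2} - 1. -/
open Finset AddChar

section AuxChar

variable {p : ℕ} [hp : Fact p.Prime]

noncomputable def qc (p : ℕ) [Fact p.Prime] : MulChar (ZMod p) ℂ :=
  (quadraticChar (ZMod p)).ringHomComp (Int.castRingHom ℂ)

lemma qc_mul_self {a : ZMod p} (ha : a ≠ 0) : qc p a * qc p a = 1 := by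
  rw [← map_mul, ← sq, qc, MulChar.ringHomComp_apply, quadraticChar_sq_one' ha]
  simp

lemma qc_ne_one (hp2 : p ≠ 2) : qc p ≠ 1 := by
  refine (MulChar.ringHomComp_ne_one_iff (f := Int.castRingHom ℂ) ?_).mpr ?_
  · exact Int.cast_injective
  · exact quadraticChar_ne_one (by rw [ZMod.ringChar_zmod_n]; exact hp2)

lemma qc_isQuadratic : (qc p).IsQuadratic :=
  (quadraticChar_isQuadratic (ZMod p)).comp _

lemma addChar_map_sum {A M : Type*} [AddCommMonoid A] [CommMonoid M]
    (ψ : AddChar A M) {ι : Type*} (s : Finset ι) (f : ι → A) :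
    ψ (∑ i ∈ s, f i) = ∏ i ∈ s, ψ (f i) := by
  classical
  induction s using Finset.induction_on with
  | empty => simp
  | insert _ _ h ih => rw [Finset.sum_insert h, Finset.prod_insert h, ψ.map_add_eq_mul, ih]

lemma sum_psi_sq (hp2 : p ≠ 2) (ψ : AddChar (ZMod p) ℂ)
    (hψ : ψ.IsPrimitive) {c : ZMod p} (hc : c ≠ 0) :
    ∑ x : ZMod p, ψ (c * (x * x)) = qc p c * gaussSum (qc p) ψ := by
  have key := gaussSum_mulShift (qc p) ψ (Units.mk0 c hc)
  rw [Units.val_mk0] at key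
  calc ∑ x : ZMod p, ψ (c * (x * x))
      = ∑ a : ZMod p, ∑ _x ∈ univ.filter (fun x => x * x = a), ψ (c * a) :=
        (Finset.sum_fiberwise' univ (fun x => x * x) (fun a => ψ (c * a))).symm
    _ = ∑ a : ZMod p, (((quadraticChar (ZMod p) a : ℤ) : ℂ) + 1) * ψ (c * a) := by
        refine Finset.sum_congr rfl fun a _ => ?_
        rw [Finset.sum_const, nsmul_eq_mul]
        congr 1
        have h := quadraticChar_card_sqrts (by rw [ZMod.ringChar_zmod_n]; exact hp2) a
        have h2 : {x : ZMod p | x ^ 2 = a}.toFinset = univ.filter (fun x => x * x = a) := by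
          ext x; simp [sq]
        rw [h2] at h
        exact_mod_cast h
    _ = (∑ a : ZMod p, qc p a * ψ (c * a)) + ∑ a : ZMod p, ψ (c * a) := by
        rw [← Finset.sum_add_distrib]
        refine Finset.sum_congr rfl fun a _ => ?_
        rw [add_mul, one_mul]
        rfl
    _ = gaussSum (qc p) (ψ.mulShift c) + 0 := by
        have h1 : ∑ a : ZMod p, qc p a * ψ (c * a) = gaussSum (qc p) (ψ.mulShift c) := by
          simp only [gaussSum, mulShift_apply]
        have h2 : ∑ a : ZMod p, ψ (c * a) = 0 := by
          simp_rw [mul_comm c]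
          rw [AddChar.sum_mulShift c hψ, if_neg hc]; simp
        rw [h1, h2]
    _ = qc p c * gaussSum (qc p) ψ := by
        rw [add_zero, ← key, ← mul_assoc, qc_mul_self hc, one_mul]

lemma diag_count (hp2 : p ≠ 2) (n : ℕ) (hn : 0 < n) (hne : Even n)
    (w : Fin n → (ZMod p)ˣ) :
    ∃ ε : ℤ, (ε = 1 ∨ ε = -1) ∧
      ((univ.filter fun x : Fin n → ZMod p =>
          QuadraticMap.weightedSumSquares (ZMod p) w x = 0).card : ℤ)
        = (p:ℤ) ^ (n - 1) + ε * ((p:ℤ) - 1) * (p:ℤ) ^ ((n - 2) / 2) := by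
  classical
  obtain ⟨k, hk2⟩ := hne
  have hk : 0 < k := by omega
  haveI : NeZero p := ⟨hp.out.ne_zero⟩
  -- the additive character
  have hζ : IsPrimitiveRoot (Complex.exp (2 * Real.pi * Complex.I / p)) p :=
    Complex.isPrimitiveRoot_exp p hp.out.ne_zero
  set ψ : AddChar (ZMod p) ℂ :=
    AddChar.zmodChar p ((IsPrimitiveRoot.iff_def _ p).mp hζ).1 with hψdef
  have hψ : ψ.IsPrimitive := AddChar.zmodChar_primitive_of_primitive_root p hζ
  set G : ℂ := gaussSum (qc p) ψ with hGdef
  have hG2 : G ^ 2 = qc p (-1) * p := by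
    have h := gaussSum_sq (qc_ne_one hp2) qc_isQuadratic hψ
    rw [ZMod.card] at h
    exact h
  -- the quadratic form as explicit sum
  have hW : ∀ x : Fin n → ZMod p,
      QuadraticMap.weightedSumSquares (ZMod p) w x = ∑ i, (w i : ZMod p) * (x i * x i) := by
    intro x
    rw [QuadraticMap.weightedSumSquares_apply]
    exact Finset.sum_congr rfl fun i _ => by rw [Units.smul_def, smul_eq_mul]
  set W : (Fin n → ZMod p) → ZMod p := fun x => ∑ i, (w i : ZMod p) * (x i * x i) with hWdef
  set N : ℕ := (univ.filter fun x : Fin n → ZMod p => W x = 0).card with hNdef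
  have hfilter : (univ.filter fun x : Fin n → ZMod p =>
      QuadraticMap.weightedSumSquares (ZMod p) w x = 0)
      = univ.filter fun x => W x = 0 := by
    refine Finset.filter_congr fun x _ => ?_
    rw [hW x]
  -- step 1 : column sums
  have step1 : ∑ x : Fin n → ZMod p, ∑ a : ZMod p, ψ (a * W x) = (p : ℂ) * N := by
    calc ∑ x : Fin n → ZMod p, ∑ a : ZMod p, ψ (a * W x)
        = ∑ x : Fin n → ZMod p, if W x = 0 then (p:ℂ) else 0 := by
          refine Finset.sum_congr rfl fun x _ => ?_
          have h := AddChar.sum_mulShift (W x) hψ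
          rw [ZMod.card] at h
          rw [h]
          split_ifs <;> simp
      _ = (p : ℂ) * N := by
          rw [← Finset.sum_filter, Finset.sum_const, nsmul_eq_mul, hNdef, mul_comm]
  -- step 2 : value of inner sum for a ≠ 0
  set D : ℂ := ∏ i, qc p (w i) with hDdef
  have hSa : ∀ a : ZMod p, a ≠ 0 →
      ∑ x : Fin n → ZMod p, ψ (a * W x) = D * G ^ n := by
    intro a ha
    have hterm : ∀ x : Fin n → ZMod p,
        ψ (a * W x) = ∏ i, ψ ((a * (w i : ZMod p)) * (x i * x i)) := by
      intro x
      rw [hWdef, Finset.mul_sum, addChar_map_sum]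
      exact Finset.prod_congr rfl fun i _ => by rw [mul_assoc]
    calc ∑ x : Fin n → ZMod p, ψ (a * W x)
        = ∑ x : Fin n → ZMod p, ∏ i, ψ ((a * (w i : ZMod p)) * (x i * x i)) :=
          Finset.sum_congr rfl fun x _ => hterm x
      _ = ∏ i, ∑ y : ZMod p, ψ ((a * (w i : ZMod p)) * (y * y)) :=
          (Fintype.prod_sum fun i (y : ZMod p) => ψ ((a * (w i : ZMod p)) * (y * y))).symm
      _ = ∏ i, (qc p (a * (w i : ZMod p)) * G) := by
          refine Finset.prod_congr rfl fun i _ => ?_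
          exact sum_psi_sq hp2 ψ hψ (mul_ne_zero ha (w i).ne_zero)
      _ = (∏ i, qc p (a * (w i : ZMod p))) * G ^ n := by
          rw [Finset.prod_mul_distrib, Finset.prod_const, Finset.card_univ, Fintype.card_fin]
      _ = D * G ^ n := by
          congr 1
          calc ∏ i, qc p (a * (w i : ZMod p))
              = ∏ i, (qc p a * qc p (w i)) := by
                exact Finset.prod_congr rfl fun i _ => map_mul _ _ _
            _ = (qc p a) ^ n * D := by
                rw [Finset.prod_mul_distrib, Finset.prod_const, Finset.card_univ,
                  Fintype.card_fin, hDdef]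
            _ = D := by
                have : (qc p a) ^ n = 1 := by
                  rw [hk2, ← two_mul, pow_mul]
                  have : qc p a ^ 2 = 1 := by rw [sq, qc_mul_self ha]
                  rw [this, one_pow]
                rw [this, one_mul]
  -- step 3 : row sums
  have step3 : ∑ a : ZMod p, ∑ x : Fin n → ZMod p, ψ (a * W x)
      = (p:ℂ) ^ n + ((p:ℂ) - 1) * (D * G ^ n) := by
    rw [← Finset.add_sum_erase univ _ (Finset.mem_univ (0 : ZMod p))]
    congr 1
    · calc ∑ x : Fin n → ZMod p, ψ (0 * W x)
          = ∑ _x : Fin n → ZMod p, (1:ℂ) := by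
            refine Finset.sum_congr rfl fun x _ => ?_
            rw [zero_mul, AddChar.map_zero_eq_one]
        _ = (p:ℂ) ^ n := by
            rw [Finset.sum_const, nsmul_eq_mul, mul_one, Finset.card_univ]
            simp [ZMod.card]
    · calc ∑ a ∈ univ.erase (0 : ZMod p), ∑ x : Fin n → ZMod p, ψ (a * W x)
          = ∑ a ∈ univ.erase (0 : ZMod p), D * G ^ n := by
            refine Finset.sum_congr rfl fun a ha => ?_
            exact hSa a (Finset.mem_erase.mp ha).1
        _ = ((p:ℂ) - 1) * (D * G ^ n) := by
            rw [Finset.sum_const, nsmul_eq_mul, Finset.card_erase_of_mem (Finset.mem_univ _),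
              Finset.card_univ, ZMod.card]
            congr 1
            push_cast [Nat.cast_sub hp.out.one_le]
            ring
  -- the sign
  set ε : ℤ := (∏ i, quadraticChar (ZMod p) (w i : ZMod p)) *
      (quadraticChar (ZMod p) (-1)) ^ k with hεdef
  have hε1 : ε = 1 ∨ ε = -1 := by
    have h1 : ∀ i : Fin n, quadraticChar (ZMod p) (w i : ZMod p) *
        quadraticChar (ZMod p) (w i : ZMod p) = 1 := by
      intro i
      rw [← map_mul, ← sq, quadraticChar_sq_one' (w i).ne_zero]
    have h2 : quadraticChar (ZMod p) (-1 : ZMod p) * quadraticChar (ZMod p) (-1 : ZMod p) = 1 := by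
      rw [← map_mul, neg_mul_neg, one_mul, map_one]
    have hεε : ε * ε = 1 := by
      calc ε * ε = (∏ i, (quadraticChar (ZMod p) (w i : ZMod p) *
            quadraticChar (ZMod p) (w i : ZMod p))) *
            ((quadraticChar (ZMod p) (-1 : ZMod p) * quadraticChar (ZMod p) (-1 : ZMod p)) ^ k) := by
            rw [Finset.prod_mul_distrib, mul_pow, hεdef]; ring
        _ = 1 := by
            rw [h2, one_pow, Finset.prod_congr rfl fun i _ => h1 i, Finset.prod_const_one, one_mul]
    exact Int.isUnit_iff.mp (IsUnit.of_mul_eq_one (a := ε) ε hεε)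
  -- D * G^n in terms of ε
  have hGn : G ^ n = (qc p (-1)) ^ k * (p:ℂ) ^ k := by
    rw [hk2, ← two_mul, pow_mul, hG2, mul_pow]
  have hDG : D * G ^ n = ((ε : ℤ) : ℂ) * (p:ℂ) ^ k := by
    rw [hGn, ← mul_assoc]
    congr 1
    rw [hDdef, hεdef]
    simp only [qc, MulChar.ringHomComp_apply, Int.coe_castRingHom]
    push_cast
    ring
  -- putting everything together
  refine ⟨ε, hε1, ?_⟩
  have hNC : (N : ℂ) = (p:ℂ) ^ (n-1) + ((ε : ℤ) : ℂ) * ((p:ℂ) - 1) * (p:ℂ) ^ ((n-2)/2) := by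
    have hpne : (p:ℂ) ≠ 0 := Nat.cast_ne_zero.mpr hp.out.ne_zero
    apply mul_left_cancel₀ hpne
    have p1 : (p:ℂ) * (p:ℂ) ^ (n-1) = (p:ℂ) ^ n := by
      rw [← pow_succ']
      congr 1
      omega
    have p2 : (p:ℂ) * (p:ℂ) ^ ((n-2)/2) = (p:ℂ) ^ k := by
      rw [← pow_succ']
      congr 1
      omega
    calc (p:ℂ) * N = ∑ a : ZMod p, ∑ x : Fin n → ZMod p, ψ (a * W x) := by
          rw [Finset.sum_comm, step1]
      _ = (p:ℂ) ^ n + ((p:ℂ) - 1) * (((ε : ℤ) : ℂ) * (p:ℂ) ^ k) := by rw [step3, hDG]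
      _ = (p:ℂ) * ((p:ℂ) ^ (n-1) + ((ε : ℤ) : ℂ) * ((p:ℂ) - 1) * (p:ℂ) ^ ((n-2)/2)) := by
          rw [← p1, ← p2]; ring
  rw [hfilter, ← hNdef]
  exact_mod_cast hNC

end AuxChar

theorem stmt_12 (p m : ℕ) (hp : p.Prime) (hp2 : p ≠ 2) (hm : 0 < m) (hme : Even m)
    (F : Type) [Field F] [Fintype F] [DecidableEq F] [Algebra (ZMod p) F]
    (hF : Fintype.card F = p ^ m)
    (Q : QuadraticForm (ZMod p) F)
    (hQ : ∀ y : F, (∀ x : F, QuadraticMap.polar Q x y = 0) → y = 0) :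
    ∃ ε : ℤ, (ε = 1 ∨ ε = -1) ∧
      ((Finset.univ.filter (fun x : F => x ≠ 0 ∧ Q x = 0)).card : ℤ)
        = (p : ℤ) ^ (m - 1) + ε * ((p : ℤ) - 1) * (p : ℤ) ^ ((m - 2) / 2) - 1 := by
  haveI hpf : Fact p.Prime := ⟨hp⟩
  have h2ne : (2 : ZMod p) ≠ 0 := by
    have h : ¬ ((p : ℕ) ∣ 2) := fun hd =>
      hp2 ((Nat.prime_dvd_prime_iff_eq hp Nat.prime_two).mp hd)
    have : ((2 : ℕ) : ZMod p) ≠ 0 := by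
      rw [Ne, ZMod.natCast_eq_zero_iff]
      exact h
    simpa using this
  haveI : Invertible (2 : ZMod p) := invertibleOfNonzero h2ne
  haveI : FiniteDimensional (ZMod p) F := Module.finite_iff_finite.mpr inferInstance
  have hfr : Module.finrank (ZMod p) F = m := by
    have hcard := Module.card_eq_pow_finrank (K := ZMod p) (V := F)
    rw [ZMod.card, hF] at hcard
    exact Nat.pow_right_injective hp.two_le hcard.symm
  have hsep : (QuadraticMap.associated (R := ZMod p) Q).SeparatingLeft := by
    intro x hx
    apply hQ x
    intro z
    rw [QuadraticMap.polar_comm]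
    have h := hx z
    have h2 := congrArg (fun B => B x z) (QuadraticMap.two_nsmul_associated (ZMod p) Q)
    simp only [LinearMap.smul_apply] at h2
    -- h2 : (2 • associated Q) x z = polarBilin Q x z
    have h3 : QuadraticMap.polarBilin Q x z = 0 := by
      rw [← h2]
      simp [h]
    simpa [QuadraticMap.polarBilin] using h3
  obtain ⟨w, ⟨e⟩⟩ := Q.equivalent_weightedSumSquares_units_of_nondegenerate' hsep
  obtain ⟨ε, hε, hcount⟩ := diag_count (p := p) hp2 (Module.finrank (ZMod p) F)
    (by rw [hfr]; exact hm) (by rw [hfr]; exact hme) w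
  refine ⟨ε, hε, ?_⟩
  have hbij : (Finset.univ.filter fun x : F => Q x = 0).card
      = (Finset.univ.filter fun v : Fin (Module.finrank (ZMod p) F) → ZMod p =>
          QuadraticMap.weightedSumSquares (ZMod p) w v = 0).card := by
    refine Finset.card_bij (fun x _ => e x) ?_ ?_ ?_
    · intro x hx
      simp only [Finset.mem_filter, Finset.mem_univ, true_and] at hx ⊢
      rw [e.map_app]
      exact hx
    · intro a _ b _ hab
      exact EquivLike.injective e hab
    · intro v hv
      simp only [Finset.mem_filter, Finset.mem_univ, true_and] at hv
      refine ⟨e.symm v, ?_, ?_⟩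
      · simp only [Finset.mem_filter, Finset.mem_univ, true_and]
        rw [← e.map_app (e.symm v)]
        have h : e (e.symm v) = v := e.toLinearEquiv.apply_symm_apply v
        rw [h]
        exact hv
      · exact e.toLinearEquiv.apply_symm_apply v
  have hins : (Finset.univ.filter fun x : F => Q x = 0)
      = insert (0:F) (Finset.univ.filter fun x : F => x ≠ 0 ∧ Q x = 0) := by
    ext x
    simp only [Finset.mem_filter, Finset.mem_univ, true_and, Finset.mem_insert]
    constructor
    · intro hx
      by_cases h0 : x = 0
      · exact Or.inl h0
      · exact Or.inr ⟨h0, hx⟩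
    · rintro (rfl | ⟨_, hx⟩)
      · exact QuadraticMap.map_zero Q
      · exact hx
  have h0notmem : (0:F) ∉ (Finset.univ.filter fun x : F => x ≠ 0 ∧ Q x = 0) := by
    simp
  have hcard1 : ((Finset.univ.filter fun x : F => x ≠ 0 ∧ Q x = 0).card : ℤ)
      = ((Finset.univ.filter fun x : F => Q x = 0).card : ℤ) - 1 := by
    rw [hins, Finset.card_insert_of_notMem h0notmem]
    push_cast
    ring
  rw [hcard1, hbij, hcount, hfr]
end
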